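/- A permutation σ satisfies: s(σ) avoids both 231 and 321 if and only if σ avoids all three patterns 2341, 3241, and 45231. That is, s^{-1}(Av(231,321)) = Av(2341, 3241, 45231). -/

import Mathlib

/-- West's stack-sorting map, implemented with fuel (fuel = length suffices). -/
def ssAux : ℕ → List ℕ → List ℕ
  | 0, _ => []
  | _ + 1, [] => []
  | fuel + 1, l =>
    let m := l.foldr max 0
    let i := l.idxOf m
    ssAux fuel (l.take i) ++ ssAux fuel (l.drop (i + 1)) ++ [m]

/-- West's stack-sorting map `s`. -/
def stackSort (l : List ℕ) : List ℕ := ssAux l.length l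

/-- `σ` contains the classical pattern `τ`. -/
def Contains (τ σ : List ℕ) : Prop :=
  ∃ f : Fin τ.length → Fin σ.length, StrictMono f ∧
    ∀ i j : Fin τ.length, τ.get i < τ.get j ↔ σ.get (f i) < σ.get (f j)

/-- `σ` avoids the classical pattern `τ`. -/
def Avoids (σ τ : List ℕ) : Prop := ¬ Contains τ σ

lemma foldr_max_mem : ∀ (l : List ℕ), l ≠ [] → l.foldr max 0 ∈ l
  | [a], _ => by simp
  | a :: b :: t, _ => by
    have H := foldr_max_mem (b :: t) (by simp)
    show max a ((b::t).foldr max 0) ∈ _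
    rcases Nat.le_total a ((b::t).foldr max 0) with h | h
    · rw [max_eq_right h]; exact List.mem_cons_of_mem _ H
    · rw [max_eq_left h]; exact List.mem_cons_self

lemma foldr_max_le {l : List ℕ} {x : ℕ} (hx : x ∈ l) : x ≤ l.foldr max 0 := by
  induction l with
  | nil => simp at hx
  | cons a t ih =>
    rcases List.mem_cons.1 hx with rfl | h
    · exact le_max_left _ _
    · exact le_trans (ih h) (le_max_right _ _)

lemma ssAux_cons_eq (fuel : ℕ) (a : ℕ) (t : List ℕ) :
    ssAux (fuel + 1) (a :: t) =
      ssAux fuel ((a :: t).take ((a::t).idxOf ((a::t).foldr max 0)))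
        ++ ssAux fuel ((a :: t).drop ((a::t).idxOf ((a::t).foldr max 0) + 1))
        ++ [(a::t).foldr max 0] := rfl

lemma ssAux_decomp (fuel : ℕ) (l : List ℕ) (hne : l ≠ []) :
    ssAux (fuel + 1) l =
      ssAux fuel (l.take (l.idxOf (l.foldr max 0)))
        ++ ssAux fuel (l.drop (l.idxOf (l.foldr max 0) + 1))
        ++ [l.foldr max 0] := by
  cases l with
  | nil => exact absurd rfl hne
  | cons a t => exact ssAux_cons_eq fuel a t

lemma ssAux_perm : ∀ (fuel : ℕ) (l : List ℕ), l.length ≤ fuel → (ssAux fuel l).Perm l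
  | 0, l, h => by
    have : l = [] := List.length_eq_zero_iff.1 (Nat.le_zero.1 h)
    subst this; simp [ssAux]
  | fuel + 1, [], _ => by simp [ssAux]
  | fuel + 1, l, h => by
    by_cases hne : l = []
    · subst hne; simp [ssAux]
    set m := l.foldr max 0 with hm
    set i := l.idxOf m with hi
    have hmem : m ∈ l := foldr_max_mem l hne
    have hilt : i < l.length := List.idxOf_lt_length_iff.2 hmem
    have hget : l.get ⟨i, hilt⟩ = m := List.idxOf_get hilt
    have hdrop : l.drop i = m :: l.drop (i + 1) := by
      rw [List.drop_eq_getElem_cons hilt]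
      simp [List.get_eq_getElem] at hget
      rw [hget]
    have hL : (l.take i).length ≤ fuel := by
      simp only [List.length_take]
      omega
    have hR : (l.drop (i + 1)).length ≤ fuel := by
      rw [List.length_drop]; omega
    rw [ssAux_decomp fuel l hne, ← hm, ← hi]
    have p1 : (ssAux fuel (l.take i) ++ ssAux fuel (l.drop (i + 1)) ++ [m]).Perm
        (l.take i ++ l.drop (i+1) ++ [m]) :=
      ((ssAux_perm fuel _ hL).append (ssAux_perm fuel _ hR)).append (List.Perm.refl _)
    have p2 : (l.take i ++ l.drop (i+1) ++ [m]).Perm (l.take i ++ (m :: l.drop (i+1))) := by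
      rw [List.append_assoc]
      exact List.Perm.append_left _ (List.perm_append_singleton _ _)
    have p3 : l.take i ++ (m :: l.drop (i+1)) = l := by rw [← hdrop, List.take_append_drop]
    have p4 := p1.trans p2; rwa [p3] at p4



section Idx
variable {L R : List ℕ} {m u : ℕ}

lemma nd_parts (nd : (L ++ m :: R).Nodup) :
    L.Nodup ∧ R.Nodup ∧ m ∉ L ∧ m ∉ R ∧ ∀ u, u ∈ L → u ∈ R → False := by
  rw [List.nodup_append'] at nd
  obtain ⟨ndL, ndmR, disj⟩ := nd
  rw [List.nodup_cons] at ndmR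
  refine ⟨ndL, ndmR.2, fun h => disj h (List.mem_cons_self), ndmR.1, ?_⟩
  intro u hL hR
  exact disj hL (List.mem_cons_of_mem _ hR)

lemma idx_mid (nd : (L ++ m :: R).Nodup) : (L ++ m :: R).idxOf m = L.length := by
  rw [List.idxOf_append_of_notMem (nd_parts nd).2.2.1, List.idxOf_cons_self]; omega

lemma idx_left (h : u ∈ L) : (L ++ m :: R).idxOf u = L.idxOf u :=
  List.idxOf_append_of_mem h

lemma idx_left_lt (h : u ∈ L) : (L ++ m :: R).idxOf u < L.length := by
  rw [idx_left h]; exact List.idxOf_lt_length_iff.2 h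

lemma idx_right (nd : (L ++ m :: R).Nodup) (h : u ∈ R) :
    (L ++ m :: R).idxOf u = L.length + 1 + R.idxOf u := by
  obtain ⟨_, _, _, hmR, disj⟩ := nd_parts nd
  have hnL : u ∉ L := fun hL => disj u hL h
  have hne : u ≠ m := fun e => hmR (e ▸ h)
  rw [List.idxOf_append_of_notMem hnL, List.idxOf_cons_ne _ (Ne.symm hne)]
  omega

lemma region_of_lt (nd : (L ++ m :: R).Nodup) (hu : u ∈ L ++ m :: R)
    (h : (L ++ m :: R).idxOf u < L.length) : u ∈ L := by
  rcases List.mem_append.1 hu with hL | hmr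
  · exact hL
  · rcases List.mem_cons.1 hmr with rfl | hR
    · rw [idx_mid nd] at h; omega
    · rw [idx_right nd hR] at h; omega

lemma region_of_gt (nd : (L ++ m :: R).Nodup) (hu : u ∈ L ++ m :: R)
    (h : L.length < (L ++ m :: R).idxOf u) : u ∈ R := by
  rcases List.mem_append.1 hu with hL | hmr
  · exact absurd (idx_left_lt (R := R) (m := m) hL) (by omega)
  · rcases List.mem_cons.1 hmr with rfl | hR
    · rw [idx_mid nd] at h; omega
    · exact hR

end Idx


lemma key : ∀ (fuel : ℕ) (l : List ℕ), l.length ≤ fuel → l.Nodup →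
    ∀ x c, x ∈ l → c ∈ l → c < x →
    ((ssAux fuel l).idxOf x < (ssAux fuel l).idxOf c ↔
      ∃ y ∈ l, x < y ∧ l.idxOf x < l.idxOf y ∧ l.idxOf y < l.idxOf c)
  | 0, l, h, _, x, c, hx, _, _ =>
      absurd hx (by simp [List.length_eq_zero_iff.1 (Nat.le_zero.1 h)])
  | fuel + 1, l, h, nd, x, c, hx, hc, hcx => by
    have hne : l ≠ [] := by rintro rfl; simp at hx
    have hmem : l.foldr max 0 ∈ l := foldr_max_mem l hne
    have hmax : ∀ u ∈ l, u ≤ l.foldr max 0 := fun u hu => foldr_max_le hu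
    have hilt : l.idxOf (l.foldr max 0) < l.length := List.idxOf_lt_length_iff.2 hmem
    have hget : l.get ⟨l.idxOf (l.foldr max 0), hilt⟩ = l.foldr max 0 := List.idxOf_get hilt
    have hdrop : l.drop (l.idxOf (l.foldr max 0)) =
        l.foldr max 0 :: l.drop (l.idxOf (l.foldr max 0) + 1) := by
      rw [List.drop_eq_getElem_cons hilt]
      simp only [List.get_eq_getElem] at hget
      rw [hget]
    have hE : l = l.take (l.idxOf (l.foldr max 0)) ++
        l.foldr max 0 :: l.drop (l.idxOf (l.foldr max 0) + 1) := by
      conv_lhs => rw [← List.take_append_drop (l.idxOf (l.foldr max 0)) l]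
      rw [hdrop]
    have hLf : (l.take (l.idxOf (l.foldr max 0))).length ≤ fuel := by
      simp only [List.length_take]; omega
    have hRf : (l.drop (l.idxOf (l.foldr max 0) + 1)).length ≤ fuel := by
      rw [List.length_drop]; omega
    rw [ssAux_decomp fuel l hne]
    generalize hGm : l.foldr max 0 = m at hE hmax hLf hRf ⊢
    generalize hGL : l.take (l.idxOf m) = L at hE hLf ⊢
    generalize hGR : l.drop (l.idxOf m + 1) = R at hE hRf ⊢
    clear hGm hGL hGR hdrop hget hilt hmem hne h
    subst hE
    -- notation
    obtain ⟨ndL, ndR, hmL, hmR, disj⟩ := nd_parts nd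
    have pL : (ssAux fuel L).Perm L := ssAux_perm fuel L hLf
    have pR : (ssAux fuel R).Perm R := ssAux_perm fuel R hRf
    have ndsL : (ssAux fuel L).Nodup := (pL.nodup_iff).2 ndL
    have ndsR : (ssAux fuel R).Nodup := (pR.nodup_iff).2 ndR
    have hlenL : (ssAux fuel L).length = L.length := pL.length_eq
    have hlenR : (ssAux fuel R).length = R.length := pR.length_eq
    -- S-side index computations
    have hSleft : ∀ u ∈ L, (ssAux fuel L ++ ssAux fuel R ++ [m]).idxOf u
        = (ssAux fuel L).idxOf u := by
      intro u hu
      have hu' : u ∈ ssAux fuel L := pL.mem_iff.2 hu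
      rw [List.idxOf_append_of_mem (List.mem_append_left _ hu'),
        List.idxOf_append_of_mem hu']
    have hSright : ∀ u ∈ R, (ssAux fuel L ++ ssAux fuel R ++ [m]).idxOf u
        = L.length + (ssAux fuel R).idxOf u := by
      intro u hu
      have hu' : u ∈ ssAux fuel R := pR.mem_iff.2 hu
      have hnL : u ∉ ssAux fuel L := fun hh => disj u (pL.mem_iff.1 hh) hu
      rw [List.idxOf_append_of_mem (List.mem_append_right _ hu'),
        List.idxOf_append_of_notMem hnL, hlenL]
    have hSm : (ssAux fuel L ++ ssAux fuel R ++ [m]).idxOf m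
        = L.length + R.length := by
      have h1 : m ∉ ssAux fuel L ++ ssAux fuel R := by
        intro hh
        rcases List.mem_append.1 hh with h2 | h2
        · exact hmL (pL.mem_iff.1 h2)
        · exact hmR (pR.mem_iff.1 h2)
      rw [List.idxOf_append_of_notMem h1, List.idxOf_cons_self,
        List.length_append, hlenL, hlenR]
      omega
    have hidxm : (L ++ m :: R).idxOf m = L.length := idx_mid nd
    -- case analysis on where x and c live
    rcases List.mem_append.1 hx with hxL | hxm
    · -- x ∈ L; hence x < m
      have hxm : x < m := lt_of_le_of_ne (hmax x hx) (fun e => hmL (e ▸ hxL))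
      rcases List.mem_append.1 hc with hcL | hcm
      · -- c ∈ L : recurse
        rw [hSleft x hxL, hSleft c hcL]
        rw [key fuel L hLf ndL x c hxL hcL hcx]
        constructor
        · rintro ⟨y, hyL, hxy, h1, h2⟩
          refine ⟨y, List.mem_append_left _ hyL, hxy, ?_, ?_⟩
          · rw [idx_left hxL, idx_left hyL]; exact h1
          · rw [idx_left hyL, idx_left hcL]; exact h2
        · rintro ⟨y, hy, hxy, h1, h2⟩
          have hcidx : (L ++ m :: R).idxOf c < L.length := idx_left_lt hcL
          have hyL : y ∈ L := region_of_lt nd hy (by omega)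
          refine ⟨y, hyL, hxy, ?_, ?_⟩
          · rw [idx_left hxL, idx_left hyL] at h1; exact h1
          · rw [idx_left hyL, idx_left hcL] at h2; exact h2
      · rcases List.mem_cons.1 hcm with rfl | hcR
        · omega
        · -- x ∈ L, c ∈ R : both sides true
          refine iff_of_true ?_ ⟨m, by simp, hxm, ?_, ?_⟩
          · rw [hSleft x hxL, hSright c hcR]
            have := List.idxOf_lt_length_iff.2 (pL.mem_iff.2 hxL)
            omega
          · rw [hidxm]; exact idx_left_lt hxL
          · rw [hidxm, idx_right nd hcR]; omega
    · rcases List.mem_cons.1 hxm with rfl | hxR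
      · -- x = m : both sides false
        refine iff_of_false ?_ ?_
        · rw [hSm]
          rcases List.mem_append.1 hc with hcL | hcm
          · rw [hSleft c hcL]
            have := List.idxOf_lt_length_iff.2 (pL.mem_iff.2 hcL)
            omega
          · rcases List.mem_cons.1 hcm with rfl | hcR
            · omega
            · rw [hSright c hcR]
              have := List.idxOf_lt_length_iff.2 (pR.mem_iff.2 hcR)
              omega
        · rintro ⟨y, hy, hxy, -, -⟩
          exact absurd (hmax y hy) (by omega)
      · -- x ∈ R
        have hxm : x < m := lt_of_le_of_ne (hmax x hx) (fun e => hmR (e ▸ hxR))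
        rcases List.mem_append.1 hc with hcL | hcm
        · -- x ∈ R, c ∈ L : both sides false
          refine iff_of_false ?_ ?_
          · rw [hSleft c hcL, hSright x hxR]
            have := List.idxOf_lt_length_iff.2 (pL.mem_iff.2 hcL)
            omega
          · rintro ⟨y, hy, hxy, h1, h2⟩
            have hcidx : (L ++ m :: R).idxOf c < L.length := idx_left_lt hcL
            rw [idx_right nd hxR] at h1
            omega
        · rcases List.mem_cons.1 hcm with rfl | hcR
          · omega
          · -- x ∈ R, c ∈ R : recurse
            rw [hSright x hxR, hSright c hcR]
            have hkey := key fuel R hRf ndR x c hxR hcR hcx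
            constructor
            · intro hlt
              obtain ⟨y, hyR, hxy, h1, h2⟩ := hkey.1 (by omega)
              refine ⟨y, by simp [hyR], hxy, ?_, ?_⟩
              · rw [idx_right nd hxR, idx_right nd hyR]; omega
              · rw [idx_right nd hyR, idx_right nd hcR]; omega
            · rintro ⟨y, hy, hxy, h1, h2⟩
              have hxidx : L.length < (L ++ m :: R).idxOf x := by
                rw [idx_right nd hxR]; omega
              have hyR : y ∈ R := region_of_gt nd hy (by omega)
              rw [idx_right nd hxR, idx_right nd hyR] at h1
              rw [idx_right nd hyR, idx_right nd hcR] at h2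
              have : (ssAux fuel R).idxOf x < (ssAux fuel R).idxOf c :=
                hkey.2 ⟨y, hyR, hxy, by omega, by omega⟩
              omega


def Pat3 (l : List ℕ) : Prop :=
  ∃ i j k : Fin l.length, i < j ∧ j < k ∧ l.get k < l.get i ∧ l.get k < l.get j

def Pat4 (l : List ℕ) : Prop :=
  ∃ i j k e : Fin l.length, i < j ∧ j < k ∧ k < e ∧
    l.get e < l.get i ∧ l.get e < l.get j ∧ l.get i < l.get k ∧ l.get j < l.get k

def Pat5 (l : List ℕ) : Prop :=
  ∃ p1 p2 p3 p4 p5 : Fin l.length, p1 < p2 ∧ p2 < p3 ∧ p3 < p4 ∧ p4 < p5 ∧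
    l.get p5 < l.get p3 ∧ l.get p3 < l.get p4 ∧ l.get p4 < l.get p1 ∧ l.get p1 < l.get p2

def mk3 {n : ℕ} (i j k : Fin n) : Fin 3 → Fin n := fun t =>
  if t.val = 0 then i else if t.val = 1 then j else k

def mk4 {n : ℕ} (i j k e : Fin n) : Fin 4 → Fin n := fun t =>
  if t.val = 0 then i else if t.val = 1 then j else if t.val = 2 then k else e

def mk5 {n : ℕ} (i j k e g : Fin n) : Fin 5 → Fin n := fun t =>
  if t.val = 0 then i else if t.val = 1 then j else if t.val = 2 then k
    else if t.val = 3 then e else g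

@[simp] lemma mk3_0 {n} (i j k : Fin n) (h : (0:ℕ) < 3) : mk3 i j k ⟨0, h⟩ = i := rfl
@[simp] lemma mk3_1 {n} (i j k : Fin n) (h : (1:ℕ) < 3) : mk3 i j k ⟨1, h⟩ = j := rfl
@[simp] lemma mk3_2 {n} (i j k : Fin n) (h : (2:ℕ) < 3) : mk3 i j k ⟨2, h⟩ = k := rfl
@[simp] lemma mk4_0 {n} (i j k e : Fin n) (h : (0:ℕ) < 4) : mk4 i j k e ⟨0, h⟩ = i := rfl
@[simp] lemma mk4_1 {n} (i j k e : Fin n) (h : (1:ℕ) < 4) : mk4 i j k e ⟨1, h⟩ = j := rfl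
@[simp] lemma mk4_2 {n} (i j k e : Fin n) (h : (2:ℕ) < 4) : mk4 i j k e ⟨2, h⟩ = k := rfl
@[simp] lemma mk4_3 {n} (i j k e : Fin n) (h : (3:ℕ) < 4) : mk4 i j k e ⟨3, h⟩ = e := rfl
@[simp] lemma mk5_0 {n} (i j k e g : Fin n) (h : (0:ℕ) < 5) : mk5 i j k e g ⟨0, h⟩ = i := rfl
@[simp] lemma mk5_1 {n} (i j k e g : Fin n) (h : (1:ℕ) < 5) : mk5 i j k e g ⟨1, h⟩ = j := rfl
@[simp] lemma mk5_2 {n} (i j k e g : Fin n) (h : (2:ℕ) < 5) : mk5 i j k e g ⟨2, h⟩ = k := rfl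
@[simp] lemma mk5_3 {n} (i j k e g : Fin n) (h : (3:ℕ) < 5) : mk5 i j k e g ⟨3, h⟩ = e := rfl
@[simp] lemma mk5_4 {n} (i j k e g : Fin n) (h : (4:ℕ) < 5) : mk5 i j k e g ⟨4, h⟩ = g := rfl

lemma sm3 {n : ℕ} {i j k : Fin n} (h1 : i < j) (h2 : j < k) : StrictMono (mk3 i j k) := by
  intro a b hab
  obtain ⟨av, ha⟩ := a; obtain ⟨bv, hb⟩ := b
  simp only [Fin.mk_lt_mk] at hab
  simp only [Fin.lt_def] at h1 h2
  interval_cases av <;> interval_cases bv <;>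
    first
      | (exfalso; omega)
      | (simp only [mk3_0, mk3_1, mk3_2, Fin.lt_def]; omega)

lemma sm4 {n : ℕ} {i j k e : Fin n} (h1 : i < j) (h2 : j < k) (h3 : k < e) :
    StrictMono (mk4 i j k e) := by
  intro a b hab
  obtain ⟨av, ha⟩ := a; obtain ⟨bv, hb⟩ := b
  simp only [Fin.mk_lt_mk] at hab
  simp only [Fin.lt_def] at h1 h2 h3
  interval_cases av <;> interval_cases bv <;>
    first
      | (exfalso; omega)
      | (simp only [mk4_0, mk4_1, mk4_2, mk4_3, Fin.lt_def]; omega)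

lemma sm5 {n : ℕ} {i j k e g : Fin n} (h1 : i < j) (h2 : j < k) (h3 : k < e) (h4 : e < g) :
    StrictMono (mk5 i j k e g) := by
  intro a b hab
  obtain ⟨av, ha⟩ := a; obtain ⟨bv, hb⟩ := b
  simp only [Fin.mk_lt_mk] at hab
  simp only [Fin.lt_def] at h1 h2 h3 h4
  interval_cases av <;> interval_cases bv <;>
    first
      | (exfalso; omega)
      | (simp only [mk5_0, mk5_1, mk5_2, mk5_3, mk5_4, Fin.lt_def]; omega)

@[simp] lemma g231_0 (h) : ([2,3,1] : List ℕ).get ⟨0, h⟩ = 2 := rfl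
@[simp] lemma g231_1 (h) : ([2,3,1] : List ℕ).get ⟨1, h⟩ = 3 := rfl
@[simp] lemma g231_2 (h) : ([2,3,1] : List ℕ).get ⟨2, h⟩ = 1 := rfl
@[simp] lemma g321_0 (h) : ([3,2,1] : List ℕ).get ⟨0, h⟩ = 3 := rfl
@[simp] lemma g321_1 (h) : ([3,2,1] : List ℕ).get ⟨1, h⟩ = 2 := rfl
@[simp] lemma g321_2 (h) : ([3,2,1] : List ℕ).get ⟨2, h⟩ = 1 := rfl
@[simp] lemma g2341_0 (h) : ([2,3,4,1] : List ℕ).get ⟨0, h⟩ = 2 := rfl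
@[simp] lemma g2341_1 (h) : ([2,3,4,1] : List ℕ).get ⟨1, h⟩ = 3 := rfl
@[simp] lemma g2341_2 (h) : ([2,3,4,1] : List ℕ).get ⟨2, h⟩ = 4 := rfl
@[simp] lemma g2341_3 (h) : ([2,3,4,1] : List ℕ).get ⟨3, h⟩ = 1 := rfl
@[simp] lemma g3241_0 (h) : ([3,2,4,1] : List ℕ).get ⟨0, h⟩ = 3 := rfl
@[simp] lemma g3241_1 (h) : ([3,2,4,1] : List ℕ).get ⟨1, h⟩ = 2 := rfl
@[simp] lemma g3241_2 (h) : ([3,2,4,1] : List ℕ).get ⟨2, h⟩ = 4 := rfl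
@[simp] lemma g3241_3 (h) : ([3,2,4,1] : List ℕ).get ⟨3, h⟩ = 1 := rfl
@[simp] lemma g45231_0 (h) : ([4,5,2,3,1] : List ℕ).get ⟨0, h⟩ = 4 := rfl
@[simp] lemma g45231_1 (h) : ([4,5,2,3,1] : List ℕ).get ⟨1, h⟩ = 5 := rfl
@[simp] lemma g45231_2 (h) : ([4,5,2,3,1] : List ℕ).get ⟨2, h⟩ = 2 := rfl
@[simp] lemma g45231_3 (h) : ([4,5,2,3,1] : List ℕ).get ⟨3, h⟩ = 3 := rfl
@[simp] lemma g45231_4 (h) : ([4,5,2,3,1] : List ℕ).get ⟨4, h⟩ = 1 := rfl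

lemma pat3_iff {l : List ℕ} (nd : l.Nodup) :
    (Contains [2,3,1] l ∨ Contains [3,2,1] l) ↔ Pat3 l := by
  constructor
  · rintro (⟨f, hf, hiff⟩ | ⟨f, hf, hiff⟩)
    · exact ⟨f ⟨0, by norm_num⟩, f ⟨1, by norm_num⟩, f ⟨2, by norm_num⟩,
        hf (by decide), hf (by decide),
        (hiff ⟨2, by norm_num⟩ ⟨0, by norm_num⟩).1 (by decide),
        (hiff ⟨2, by norm_num⟩ ⟨1, by norm_num⟩).1 (by decide)⟩
    · exact ⟨f ⟨0, by norm_num⟩, f ⟨1, by norm_num⟩, f ⟨2, by norm_num⟩,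
        hf (by decide), hf (by decide),
        (hiff ⟨2, by norm_num⟩ ⟨0, by norm_num⟩).1 (by decide),
        (hiff ⟨2, by norm_num⟩ ⟨1, by norm_num⟩).1 (by decide)⟩
  · rintro ⟨i, j, k, hij, hjk, h1, h2⟩
    have hne : l.get i ≠ l.get j := fun heq => absurd (List.Nodup.get_inj_iff nd |>.1 heq)
      (fun e' => absurd (e' ▸ hij) (lt_irrefl _))
    rcases lt_or_gt_of_ne hne with hlt | hgt
    · left
      refine ⟨mk3 i j k, sm3 hij hjk, fun p q => ?_⟩
      obtain ⟨pv, hp⟩ := p; obtain ⟨qv, hq⟩ := q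
      simp only [List.length_cons, List.length_nil] at hp hq
      interval_cases pv <;> interval_cases qv <;>
        simp only [mk3_0, mk3_1, mk3_2, g231_0, g231_1, g231_2] <;> omega
    · right
      refine ⟨mk3 i j k, sm3 hij hjk, fun p q => ?_⟩
      obtain ⟨pv, hp⟩ := p; obtain ⟨qv, hq⟩ := q
      simp only [List.length_cons, List.length_nil] at hp hq
      interval_cases pv <;> interval_cases qv <;>
        simp only [mk3_0, mk3_1, mk3_2, g321_0, g321_1, g321_2] <;> omega

lemma pat4_iff {l : List ℕ} (nd : l.Nodup) :
    (Contains [2,3,4,1] l ∨ Contains [3,2,4,1] l) ↔ Pat4 l := by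
  constructor
  · rintro (⟨f, hf, hiff⟩ | ⟨f, hf, hiff⟩)
    · exact ⟨f ⟨0, by norm_num⟩, f ⟨1, by norm_num⟩, f ⟨2, by norm_num⟩, f ⟨3, by norm_num⟩,
        hf (by decide), hf (by decide), hf (by decide),
        (hiff ⟨3, by norm_num⟩ ⟨0, by norm_num⟩).1 (by decide),
        (hiff ⟨3, by norm_num⟩ ⟨1, by norm_num⟩).1 (by decide),
        (hiff ⟨0, by norm_num⟩ ⟨2, by norm_num⟩).1 (by decide),
        (hiff ⟨1, by norm_num⟩ ⟨2, by norm_num⟩).1 (by decide)⟩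
    · exact ⟨f ⟨0, by norm_num⟩, f ⟨1, by norm_num⟩, f ⟨2, by norm_num⟩, f ⟨3, by norm_num⟩,
        hf (by decide), hf (by decide), hf (by decide),
        (hiff ⟨3, by norm_num⟩ ⟨0, by norm_num⟩).1 (by decide),
        (hiff ⟨3, by norm_num⟩ ⟨1, by norm_num⟩).1 (by decide),
        (hiff ⟨0, by norm_num⟩ ⟨2, by norm_num⟩).1 (by decide),
        (hiff ⟨1, by norm_num⟩ ⟨2, by norm_num⟩).1 (by decide)⟩
  · rintro ⟨i, j, k, e, hij, hjk, hke, h1, h2, h3, h4⟩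
    have hne : l.get i ≠ l.get j := fun heq => absurd (List.Nodup.get_inj_iff nd |>.1 heq)
      (fun e' => absurd (e' ▸ hij) (lt_irrefl _))
    rcases lt_or_gt_of_ne hne with hlt | hgt
    · left
      refine ⟨mk4 i j k e, sm4 hij hjk hke, fun p q => ?_⟩
      obtain ⟨pv, hp⟩ := p; obtain ⟨qv, hq⟩ := q
      simp only [List.length_cons, List.length_nil] at hp hq
      interval_cases pv <;> interval_cases qv <;>
        simp only [mk4_0, mk4_1, mk4_2, mk4_3, g2341_0, g2341_1, g2341_2, g2341_3] <;> omega
    · right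
      refine ⟨mk4 i j k e, sm4 hij hjk hke, fun p q => ?_⟩
      obtain ⟨pv, hp⟩ := p; obtain ⟨qv, hq⟩ := q
      simp only [List.length_cons, List.length_nil] at hp hq
      interval_cases pv <;> interval_cases qv <;>
        simp only [mk4_0, mk4_1, mk4_2, mk4_3, g3241_0, g3241_1, g3241_2, g3241_3] <;> omega

lemma pat5_iff {l : List ℕ} :
    Contains [4,5,2,3,1] l ↔ Pat5 l := by
  constructor
  · rintro ⟨f, hf, hiff⟩
    exact ⟨f ⟨0, by norm_num⟩, f ⟨1, by norm_num⟩, f ⟨2, by norm_num⟩, f ⟨3, by norm_num⟩,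
      f ⟨4, by norm_num⟩,
      hf (by decide), hf (by decide), hf (by decide), hf (by decide),
      (hiff ⟨4, by norm_num⟩ ⟨2, by norm_num⟩).1 (by decide),
      (hiff ⟨2, by norm_num⟩ ⟨3, by norm_num⟩).1 (by decide),
      (hiff ⟨3, by norm_num⟩ ⟨0, by norm_num⟩).1 (by decide),
      (hiff ⟨0, by norm_num⟩ ⟨1, by norm_num⟩).1 (by decide)⟩
  · rintro ⟨p1, p2, p3, p4, p5, h12, h23, h34, h45, hv1, hv2, hv3, hv4⟩
    refine ⟨mk5 p1 p2 p3 p4 p5, sm5 h12 h23 h34 h45, fun p q => ?_⟩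
    obtain ⟨pv, hp⟩ := p; obtain ⟨qv, hq⟩ := q
    simp only [List.length_cons, List.length_nil] at hp hq
    interval_cases pv <;> interval_cases qv <;>
      simp only [mk5_0, mk5_1, mk5_2, mk5_3, mk5_4,
        g45231_0, g45231_1, g45231_2, g45231_3, g45231_4] <;> omega



def Qs (l : List ℕ) : Prop :=
  ∃ a b c, a ∈ l ∧ b ∈ l ∧ c ∈ l ∧ a ≠ b ∧ c < a ∧ c < b ∧
    l.idxOf a < l.idxOf c ∧ l.idxOf b < l.idxOf c

def Fp (l : List ℕ) : Prop :=
  ∃ a b c y z, a ∈ l ∧ b ∈ l ∧ c ∈ l ∧ y ∈ l ∧ z ∈ l ∧ a ≠ b ∧ c < a ∧ c < b ∧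
    a < y ∧ b < z ∧
    l.idxOf a < l.idxOf y ∧ l.idxOf y < l.idxOf c ∧
    l.idxOf b < l.idxOf z ∧ l.idxOf z < l.idxOf c

def R4 (l : List ℕ) : Prop :=
  ∃ a b d c, a ∈ l ∧ b ∈ l ∧ d ∈ l ∧ c ∈ l ∧
    l.idxOf a < l.idxOf b ∧ l.idxOf b < l.idxOf d ∧ l.idxOf d < l.idxOf c ∧
    c < a ∧ c < b ∧ a < d ∧ b < d

def R5 (l : List ℕ) : Prop :=
  ∃ v1 v2 v3 v4 v5, v1 ∈ l ∧ v2 ∈ l ∧ v3 ∈ l ∧ v4 ∈ l ∧ v5 ∈ l ∧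
    l.idxOf v1 < l.idxOf v2 ∧ l.idxOf v2 < l.idxOf v3 ∧
    l.idxOf v3 < l.idxOf v4 ∧ l.idxOf v4 < l.idxOf v5 ∧
    v5 < v3 ∧ v3 < v4 ∧ v4 < v1 ∧ v1 < v2

lemma fp_step {l : List ℕ} {a b c y z : ℕ}
    (ha : a ∈ l) (hb : b ∈ l) (hc : c ∈ l) (hy : y ∈ l) (hz : z ∈ l)
    (hca : c < a) (hcb : c < b) (hay : a < y) (hbz : b < z)
    (h1 : l.idxOf a < l.idxOf y) (h2 : l.idxOf y < l.idxOf c)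
    (h3 : l.idxOf b < l.idxOf z) (h4 : l.idxOf z < l.idxOf c)
    (hij : l.idxOf a < l.idxOf b) : R4 l ∨ R5 l := by
  rcases lt_trichotomy z a with hza | hza | hza
  · -- z < a, so b < z < a < y
    rcases lt_trichotomy (l.idxOf y) (l.idxOf z) with hyz | hyz | hyz
    · -- i' < j'
      rcases lt_trichotomy (l.idxOf y) (l.idxOf b) with hyb | hyb | hyb
      · -- a, y, b, z, c : pattern 45231
        exact Or.inr ⟨a, y, b, z, c, ha, hy, hb, hz, hc, h1, hyb, h3, h4,
          hcb, hbz, hza, hay⟩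
      · -- y = b impossible
        exfalso
        have : y = b := by
          have h5 := List.idxOf_inj (y := b) hy
          omega
        omega
      · -- a, b, y, c : pattern with b < y
        exact Or.inl ⟨a, b, y, c, ha, hb, hy, hc, hij, hyb, h2, hca, hcb, hay, by omega⟩
    · -- y = z impossible
      exfalso
      have : y = z := by
        have h5 := List.idxOf_inj (y := z) hy
        omega
      omega
    · -- j' < i' : a, z, y, c : pattern 3241-like
      exact Or.inl ⟨a, z, y, c, ha, hz, hy, hc, by omega, hyz, h2, hca, by omega, hay, by omega⟩
  · -- z = a impossible since idxOf z > idxOf b > idxOf a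
    exfalso
    have : l.idxOf z = l.idxOf a := by rw [hza]
    omega
  · -- a < z : a, b, z, c
    exact Or.inl ⟨a, b, z, c, ha, hb, hz, hc, hij, h3, h4, hca, hcb, hza, hbz⟩

lemma fp_iff_r45 {l : List ℕ} : Fp l ↔ R4 l ∨ R5 l := by
  constructor
  · rintro ⟨a, b, c, y, z, ha, hb, hc, hy, hz, hab, hca, hcb, hay, hbz, h1, h2, h3, h4⟩
    rcases lt_trichotomy (l.idxOf a) (l.idxOf b) with hij | hij | hij
    · exact fp_step ha hb hc hy hz hca hcb hay hbz h1 h2 h3 h4 hij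
    · exact absurd (List.idxOf_inj (y := b) ha |>.1 hij) hab
    · exact fp_step hb ha hc hz hy hcb hca hbz hay h3 h4 h1 h2 hij
  · rintro (⟨a, b, d, c, ha, hb, hd, hc, h1, h2, h3, hca, hcb, had, hbd⟩ |
      ⟨v1, v2, v3, v4, v5, h1m, h2m, h3m, h4m, h5m, i12, i23, i34, i45, w53, w34, w41, w12⟩)
    · have hab : a ≠ b := fun e => by subst e; omega
      exact ⟨a, b, c, d, d, ha, hb, hc, hd, hd, hab, hca, hcb, had, hbd,
        by omega, h3, h2, h3⟩
    · have hab : v1 ≠ v3 := fun e => by subst e; omega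
      exact ⟨v1, v3, v5, v2, v4, h1m, h3m, h5m, h2m, h4m, hab, by omega, by omega,
        w12, w34, i12, by omega, i34, i45⟩

lemma pat3_qs {l : List ℕ} (nd : l.Nodup) : Pat3 l ↔ Qs l := by
  constructor
  · rintro ⟨i, j, k, hij, hjk, h1, h2⟩
    refine ⟨l.get i, l.get j, l.get k, List.get_mem _ _, List.get_mem _ _,
      List.get_mem _ _, fun e => ?_, h1, h2, ?_, ?_⟩
    · exact absurd (nd.get_inj_iff.1 e) (fun e' => absurd (e' ▸ hij) (lt_irrefl _))
    · rw [List.get_idxOf nd, List.get_idxOf nd]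
      exact_mod_cast Fin.lt_def.1 (hij.trans hjk)
    · rw [List.get_idxOf nd, List.get_idxOf nd]
      exact_mod_cast Fin.lt_def.1 hjk
  · rintro ⟨a, b, c, ha, hb, hc, hab, hca, hcb, h1, h2⟩
    have hia : l.idxOf a < l.length := List.idxOf_lt_length_iff.2 ha
    have hib : l.idxOf b < l.length := List.idxOf_lt_length_iff.2 hb
    have hic : l.idxOf c < l.length := List.idxOf_lt_length_iff.2 hc
    have ga : l.get ⟨l.idxOf a, hia⟩ = a := List.idxOf_get hia
    have gb : l.get ⟨l.idxOf b, hib⟩ = b := List.idxOf_get hib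
    have gc : l.get ⟨l.idxOf c, hic⟩ = c := List.idxOf_get hic
    rcases lt_trichotomy (l.idxOf a) (l.idxOf b) with hlt | heq | hgt
    · exact ⟨⟨_, hia⟩, ⟨_, hib⟩, ⟨_, hic⟩, Fin.mk_lt_mk.2 hlt, Fin.mk_lt_mk.2 h2,
        by rw [ga, gc]; exact hca, by rw [gb, gc]; exact hcb⟩
    · exact absurd (List.idxOf_inj (y := b) ha |>.1 heq) hab
    · exact ⟨⟨_, hib⟩, ⟨_, hia⟩, ⟨_, hic⟩, Fin.mk_lt_mk.2 hgt, Fin.mk_lt_mk.2 h1,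
        by rw [gb, gc]; exact hcb, by rw [ga, gc]; exact hca⟩

lemma pat4_r4 {l : List ℕ} (nd : l.Nodup) : Pat4 l ↔ R4 l := by
  constructor
  · rintro ⟨i, j, k, e, hij, hjk, hke, h1, h2, h3, h4⟩
    refine ⟨l.get i, l.get j, l.get k, l.get e, List.get_mem _ _, List.get_mem _ _,
      List.get_mem _ _, List.get_mem _ _, ?_, ?_, ?_, h1, h2, h3, h4⟩ <;>
      rw [List.get_idxOf nd, List.get_idxOf nd]
    · exact_mod_cast Fin.lt_def.1 hij
    · exact_mod_cast Fin.lt_def.1 hjk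
    · exact_mod_cast Fin.lt_def.1 hke
  · rintro ⟨a, b, d, c, ha, hb, hd, hc, h1, h2, h3, hca, hcb, had, hbd⟩
    have hia : l.idxOf a < l.length := List.idxOf_lt_length_iff.2 ha
    have hib : l.idxOf b < l.length := List.idxOf_lt_length_iff.2 hb
    have hid : l.idxOf d < l.length := List.idxOf_lt_length_iff.2 hd
    have hic : l.idxOf c < l.length := List.idxOf_lt_length_iff.2 hc
    have ga : l.get ⟨l.idxOf a, hia⟩ = a := List.idxOf_get hia
    have gb : l.get ⟨l.idxOf b, hib⟩ = b := List.idxOf_get hib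
    have gd : l.get ⟨l.idxOf d, hid⟩ = d := List.idxOf_get hid
    have gc : l.get ⟨l.idxOf c, hic⟩ = c := List.idxOf_get hic
    exact ⟨⟨_, hia⟩, ⟨_, hib⟩, ⟨_, hid⟩, ⟨_, hic⟩, Fin.mk_lt_mk.2 h1, Fin.mk_lt_mk.2 h2,
      Fin.mk_lt_mk.2 h3,
      by rw [ga, gc]; exact hca, by rw [gb, gc]; exact hcb,
      by rw [ga, gd]; exact had, by rw [gb, gd]; exact hbd⟩

lemma pat5_r5 {l : List ℕ} (nd : l.Nodup) : Pat5 l ↔ R5 l := by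
  constructor
  · rintro ⟨p1, p2, p3, p4, p5, h12, h23, h34, h45, hv1, hv2, hv3, hv4⟩
    refine ⟨l.get p1, l.get p2, l.get p3, l.get p4, l.get p5, List.get_mem _ _,
      List.get_mem _ _, List.get_mem _ _, List.get_mem _ _, List.get_mem _ _,
      ?_, ?_, ?_, ?_, hv1, hv2, hv3, hv4⟩ <;>
      rw [List.get_idxOf nd, List.get_idxOf nd]
    · exact_mod_cast Fin.lt_def.1 h12
    · exact_mod_cast Fin.lt_def.1 h23
    · exact_mod_cast Fin.lt_def.1 h34
    · exact_mod_cast Fin.lt_def.1 h45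
  · rintro ⟨v1, v2, v3, v4, v5, h1m, h2m, h3m, h4m, h5m, i12, i23, i34, i45, w1, w2, w3, w4⟩
    have h1 : l.idxOf v1 < l.length := List.idxOf_lt_length_iff.2 h1m
    have h2 : l.idxOf v2 < l.length := List.idxOf_lt_length_iff.2 h2m
    have h3 : l.idxOf v3 < l.length := List.idxOf_lt_length_iff.2 h3m
    have h4 : l.idxOf v4 < l.length := List.idxOf_lt_length_iff.2 h4m
    have h5 : l.idxOf v5 < l.length := List.idxOf_lt_length_iff.2 h5m
    have g1 : l.get ⟨l.idxOf v1, h1⟩ = v1 := List.idxOf_get h1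
    have g2 : l.get ⟨l.idxOf v2, h2⟩ = v2 := List.idxOf_get h2
    have g3 : l.get ⟨l.idxOf v3, h3⟩ = v3 := List.idxOf_get h3
    have g4 : l.get ⟨l.idxOf v4, h4⟩ = v4 := List.idxOf_get h4
    have g5 : l.get ⟨l.idxOf v5, h5⟩ = v5 := List.idxOf_get h5
    exact ⟨⟨_, h1⟩, ⟨_, h2⟩, ⟨_, h3⟩, ⟨_, h4⟩, ⟨_, h5⟩, Fin.mk_lt_mk.2 i12,
      Fin.mk_lt_mk.2 i23, Fin.mk_lt_mk.2 i34, Fin.mk_lt_mk.2 i45,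
      by rw [g5, g3]; exact w1, by rw [g3, g4]; exact w2,
      by rw [g4, g1]; exact w3, by rw [g1, g2]; exact w4⟩

lemma qs_fp {σ : List ℕ} (nd : σ.Nodup) : Qs (stackSort σ) ↔ Fp σ := by
  have hperm : (stackSort σ).Perm σ := ssAux_perm σ.length σ le_rfl
  have hkey := key σ.length σ le_rfl nd
  constructor
  · rintro ⟨a, b, c, ha, hb, hc, hab, hca, hcb, h1, h2⟩
    have ha' : a ∈ σ := hperm.mem_iff.1 ha
    have hb' : b ∈ σ := hperm.mem_iff.1 hb
    have hc' : c ∈ σ := hperm.mem_iff.1 hc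
    obtain ⟨y, hy, hay, hy1, hy2⟩ := (hkey a c ha' hc' hca).1 h1
    obtain ⟨z, hz, hbz, hz1, hz2⟩ := (hkey b c hb' hc' hcb).1 h2
    exact ⟨a, b, c, y, z, ha', hb', hc', hy, hz, hab, hca, hcb, hay, hbz,
      hy1, hy2, hz1, hz2⟩
  · rintro ⟨a, b, c, y, z, ha, hb, hc, hy, hz, hab, hca, hcb, hay, hbz,
      hy1, hy2, hz1, hz2⟩
    exact ⟨a, b, c, hperm.mem_iff.2 ha, hperm.mem_iff.2 hb, hperm.mem_iff.2 hc,
      hab, hca, hcb,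
      (hkey a c ha hc hca).2 ⟨y, hy, hay, hy1, hy2⟩,
      (hkey b c hb hc hcb).2 ⟨z, hz, hbz, hz1, hz2⟩⟩

/-- `s(σ)` avoids 231 and 321 iff `σ` avoids 2341, 3241 and 45231:
`s⁻¹(Av(231,321)) = Av(2341, 3241, 45231)`. -/
theorem stmt5 (n : ℕ) (σ : List ℕ) (hσ : σ.Perm (List.range' 1 n)) :
    (Avoids (stackSort σ) [2, 3, 1] ∧ Avoids (stackSort σ) [3, 2, 1]) ↔
      Avoids σ [2, 3, 4, 1] ∧ Avoids σ [3, 2, 4, 1] ∧ Avoids σ [4, 5, 2, 3, 1] := by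
  have nd : σ.Nodup := hσ.nodup_iff.2 (by simp [List.nodup_range'])
  have ndS : (stackSort σ).Nodup := ((ssAux_perm σ.length σ le_rfl).nodup_iff).2 nd
  have big : (Contains [2,3,1] (stackSort σ) ∨ Contains [3,2,1] (stackSort σ)) ↔
      ((Contains [2,3,4,1] σ ∨ Contains [3,2,4,1] σ) ∨ Contains [4,5,2,3,1] σ) := by
    rw [pat3_iff ndS, pat3_qs ndS, qs_fp nd, fp_iff_r45, ← pat4_r4 nd, ← pat5_r5 nd,
      ← pat4_iff nd, ← pat5_iff]
  unfold Avoids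
  tauto
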